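/- Let I ⊆ ℝ be a nonempty open interval and suppose F, f1, f2, g1, g2, G solve F((x+y)/2) + f1(x) + f2(y) = G(g1(x) + g2(y)) for all x, y in a subinterval J ⊆ I, where g1 and g2 are affine on J: g_k(x) = D(x) + δ_k with D : ℝ → ℝ an invertible additive function and δ1, δ2 ∈ ℝ. Then there exist an additive function C : ℝ → ℝ and constants γ1, γ2 ∈ ℝ such that f_k(x) = C(x) + γ_k for all x ∈ J (k = 1, 2), and G(u) = F((1/2)D⁻¹(u - δ)) + C(D⁻¹(u - δ)) + γ for all u ∈ g1(J) + g2(J), where δ = δ1 + δ2 and γ = γ1 + γ2. -/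

import Mathlib

lemma locext (r : ℝ) (hr : 0 < r) (A : ℝ → ℝ)
    (hA : ∀ s t : ℝ, |s| < r → |t| < r → |s + t| < r → A (s + t) = A s + A t) :
    ∃ C : ℝ → ℝ, (∀ u v : ℝ, C (u + v) = C u + C v) ∧ ∀ t : ℝ, |t| < r → C t = A t := by
  have hA0 : A 0 = 0 := by
    have h := hA 0 0 (by simpa using hr) (by simpa using hr) (by simpa using hr)
    simp only [add_zero] at h
    linarith
  have hiter : ∀ (k : ℕ) (u : ℝ), |(k : ℝ) * u| < r → A ((k : ℝ) * u) = k * A u := by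
    intro k
    induction k with
    | zero => intro u _; simpa using hA0
    | succ k ih =>
      intro u h
      have habs : |((k:ℝ)+1) * u| = ((k:ℝ)+1) * |u| := by
        rw [abs_mul, abs_of_nonneg (by positivity)]
      have hku : |(k:ℝ) * u| < r := by
        rw [abs_mul, abs_of_nonneg (by positivity : (0:ℝ) ≤ (k:ℝ))]
        push_cast at h
        rw [habs] at h
        nlinarith [abs_nonneg u]
      have hu : |u| < r := by
        push_cast at h
        rw [habs] at h
        nlinarith [abs_nonneg u, Nat.cast_nonneg (α := ℝ) k]
      have h' : |(k:ℝ) * u + u| < r := by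
        push_cast
        convert h using 2
        push_cast
        ring
      have := hA ((k:ℝ) * u) u hku hu h'
      push_cast
      rw [show ((k:ℝ)+1) * u = (k:ℝ) * u + u by ring, this, ih u hku]
      ring
  have hwell : ∀ (n m : ℕ) (t : ℝ), 0 < n → 0 < m → |t| < n * r → |t| < m * r →
      (n:ℝ) * A (t / n) = (m:ℝ) * A (t / m) := by
    have step : ∀ (n m : ℕ) (t : ℝ), 0 < n → 0 < m → |t| < n * r →
        (n:ℝ) * A (t / n) = ((n*m : ℕ):ℝ) * A (t / (n*m : ℕ)) := by
      intro n m t hn hm hnt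
      have hn' : (0:ℝ) < n := by exact_mod_cast hn
      have hm' : (0:ℝ) < m := by exact_mod_cast hm
      have key : A (t / n) = m * A (t / (n*m : ℕ)) := by
        have harg : t / n = (m:ℝ) * (t / ((n*m : ℕ):ℝ)) := by
          push_cast
          field_simp
        have hb : |(m:ℝ) * (t / ((n*m:ℕ):ℝ))| < r := by
          rw [← harg, abs_div, abs_of_nonneg hn'.le, div_lt_iff₀ hn']
          linarith
        rw [harg, hiter m _ hb]
      rw [key]; push_cast; ring
    intro n m t hn hm hnt hmt
    have h1 := step n m t hn hm hnt
    have h2 := step m n t hm hn hmt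
    rw [h1, h2, Nat.mul_comm]
  set N : ℝ → ℕ := fun t => ⌊|t| / r⌋₊ + 1 with hN_def
  have hNpos : ∀ t : ℝ, 0 < N t := fun t => Nat.succ_pos _
  have hNlt : ∀ t : ℝ, |t| < (N t : ℝ) * r := by
    intro t
    have h1 : |t| / r < (⌊|t| / r⌋₊ : ℝ) + 1 := Nat.lt_floor_add_one _
    have : |t| / r < (N t : ℝ) := by simp [hN_def]; push_cast; linarith
    calc |t| = (|t| / r) * r := by field_simp
    _ < (N t : ℝ) * r := by nlinarith
  refine ⟨fun t => (N t : ℝ) * A (t / N t), ?_, ?_⟩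
  · intro u v
    set n : ℕ := N u + N v + N (u + v) with hn_def
    have hnpos : 0 < n := by positivity
    have hmono : ∀ w : ℝ, N w ≤ n → |w| < (n:ℝ) * r → True := fun _ _ _ => trivial
    have hle : ∀ w : ℝ, N w ≤ n → |w| < (n:ℝ) * r := by
      intro w hw
      calc |w| < (N w : ℝ) * r := hNlt w
      _ ≤ (n : ℝ) * r := by
          apply mul_le_mul_of_nonneg_right _ hr.le
          exact_mod_cast hw
    have hu' : |u| < (n:ℝ) * r := hle u (by omega)
    have hv' : |v| < (n:ℝ) * r := hle v (by omega)
    have huv' : |u + v| < (n:ℝ) * r := hle (u+v) (by omega)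
    have hn' : (0:ℝ) < n := by exact_mod_cast hnpos
    have e1 : (N u : ℝ) * A (u / N u) = (n:ℝ) * A (u / n) :=
      hwell _ _ _ (hNpos u) hnpos (hNlt u) hu'
    have e2 : (N v : ℝ) * A (v / N v) = (n:ℝ) * A (v / n) :=
      hwell _ _ _ (hNpos v) hnpos (hNlt v) hv'
    have e3 : (N (u+v) : ℝ) * A ((u+v) / N (u+v)) = (n:ℝ) * A ((u+v) / n) :=
      hwell _ _ _ (hNpos (u+v)) hnpos (hNlt (u+v)) huv'
    have hsplit : A ((u+v)/n) = A (u/n) + A (v/n) := by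
      have b1 : |u/n| < r := by rw [abs_div, abs_of_nonneg hn'.le, div_lt_iff₀ hn']; linarith
      have b2 : |v/n| < r := by rw [abs_div, abs_of_nonneg hn'.le, div_lt_iff₀ hn']; linarith
      have b3 : |u/n + v/n| < r := by
        rw [← add_div, abs_div, abs_of_nonneg hn'.le, div_lt_iff₀ hn']; linarith
      rw [show (u+v)/(n:ℝ) = u/n + v/n by ring]
      exact hA _ _ b1 b2 b3
    simp only []
    rw [e3, hsplit]
    rw [e1, e2]; ring
  · intro t ht
    have h1 : |t| < ((1:ℕ):ℝ) * r := by push_cast; linarith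
    have := hwell (N t) 1 t (hNpos t) one_pos (hNlt t) h1
    simpa using this

open Pointwise

theorem stmt11 (a b c d : ℝ) (hab : a < b) (hcd : c < d)
    (hsub : Set.Ioo c d ⊆ Set.Ioo a b)
    (F f1 f2 g1 g2 G : ℝ → ℝ)
    (D Dinv : ℝ → ℝ)
    (hDadd : ∀ u v : ℝ, D (u + v) = D u + D v)
    (hDinv1 : ∀ x : ℝ, Dinv (D x) = x)
    (hDinv2 : ∀ y : ℝ, D (Dinv y) = y)
    (δ1 δ2 : ℝ)
    (hg1 : ∀ x ∈ Set.Ioo c d, g1 x = D x + δ1)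
    (hg2 : ∀ x ∈ Set.Ioo c d, g2 x = D x + δ2)
    (heq : ∀ x ∈ Set.Ioo c d, ∀ y ∈ Set.Ioo c d,
      F ((x + y) / 2) + f1 x + f2 y = G (g1 x + g2 y)) :
    ∃ C : ℝ → ℝ, (∀ u v : ℝ, C (u + v) = C u + C v) ∧
      ∃ γ1 γ2 : ℝ,
        (∀ x ∈ Set.Ioo c d, f1 x = C x + γ1) ∧
        (∀ x ∈ Set.Ioo c d, f2 x = C x + γ2) ∧
        (∀ u ∈ g1 '' Set.Ioo c d + g2 '' Set.Ioo c d,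
          G u = F ((1 / 2) * Dinv (u - (δ1 + δ2))) + C (Dinv (u - (δ1 + δ2))) + (γ1 + γ2)) := by
  set m : ℝ := (c + d) / 2 with hm_def
  have hm : m ∈ Set.Ioo c d := ⟨by rw [hm_def]; linarith, by rw [hm_def]; linarith⟩
  set A : ℝ → ℝ := fun t => f2 (m + t / 2) - f2 (m - t / 2) with hA_def
  -- key lemma for f1
  have key1 : ∀ x ∈ Set.Ioo c d, ∀ t : ℝ, x + t ∈ Set.Ioo c d →
      f1 (x + t) = f1 x + A t := by
    intro x hx t hxt
    obtain ⟨hx1, hx2⟩ := hx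
    obtain ⟨hxt1, hxt2⟩ := hxt
    have hmem1 : m + t / 2 ∈ Set.Ioo c d := ⟨by rw [hm_def]; linarith, by rw [hm_def]; linarith⟩
    have hmem2 : m - t / 2 ∈ Set.Ioo c d := ⟨by rw [hm_def]; linarith, by rw [hm_def]; linarith⟩
    have e1 := heq (x + t) ⟨hxt1, hxt2⟩ (m - t / 2) hmem2
    have e2 := heq x ⟨hx1, hx2⟩ (m + t / 2) hmem1
    rw [hg1 _ ⟨hxt1, hxt2⟩, hg2 _ hmem2] at e1
    rw [hg1 _ ⟨hx1, hx2⟩, hg2 _ hmem1] at e2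
    have hF : (x + t + (m - t / 2)) / 2 = (x + (m + t / 2)) / 2 := by ring
    have hG : D (x + t) + δ1 + (D (m - t / 2) + δ2) = D x + δ1 + (D (m + t / 2) + δ2) := by
      have h1 : D (x + t) + D (m - t / 2) = D (x + t + (m - t / 2)) := (hDadd _ _).symm
      have h2 : D x + D (m + t / 2) = D (x + (m + t / 2)) := (hDadd _ _).symm
      have h3 : x + t + (m - t / 2) = x + (m + t / 2) := by ring
      rw [h3] at h1
      linarith [h1, h2]
    rw [hF, hG] at e1
    simp only [hA_def]
    linarith [e1, e2]
  -- key lemma for f2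
  have key2 : ∀ y ∈ Set.Ioo c d, ∀ t : ℝ, y + t ∈ Set.Ioo c d →
      f2 (y + t) = f2 y + A t := by
    intro y hy t hyt
    obtain ⟨hy1, hy2⟩ := hy
    obtain ⟨hyt1, hyt2⟩ := hyt
    have hmem1 : m + t / 2 ∈ Set.Ioo c d := ⟨by rw [hm_def]; linarith, by rw [hm_def]; linarith⟩
    have hmem2 : m - t / 2 ∈ Set.Ioo c d := ⟨by rw [hm_def]; linarith, by rw [hm_def]; linarith⟩
    have e1 := heq (m - t / 2) hmem2 (y + t) ⟨hyt1, hyt2⟩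
    have e2 := heq (m + t / 2) hmem1 y ⟨hy1, hy2⟩
    rw [hg1 _ hmem2, hg2 _ ⟨hyt1, hyt2⟩] at e1
    rw [hg1 _ hmem1, hg2 _ ⟨hy1, hy2⟩] at e2
    have hF : (m - t / 2 + (y + t)) / 2 = (m + t / 2 + y) / 2 := by ring
    have hG : D (m - t / 2) + δ1 + (D (y + t) + δ2) = D (m + t / 2) + δ1 + (D y + δ2) := by
      have h1 : D (m - t / 2) + D (y + t) = D (m - t / 2 + (y + t)) := (hDadd _ _).symm
      have h2 : D (m + t / 2) + D y = D (m + t / 2 + y) := (hDadd _ _).symm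
      have h3 : m - t / 2 + (y + t) = m + t / 2 + y := by ring
      rw [h3] at h1
      linarith [h1, h2]
    rw [hF, hG] at e1
    -- now relate f1 (m + t/2) - f1 (m - t/2) to A t
    have hf1 : f1 (m + t / 2) = f1 (m - t / 2) + A t := by
      have := key1 (m - t / 2) hmem2 t (by
        rw [show m - t / 2 + t = m + t / 2 by ring]; exact hmem1)
      rw [show m - t / 2 + t = m + t / 2 by ring] at this
      exact this
    linear_combination e1 - e2 + hf1
  -- local additivity of A
  have hAadd : ∀ s t : ℝ, |s| < d - c → |t| < d - c → |s + t| < d - c →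
      A (s + t) = A s + A t := by
    intro s t hs ht hst
    obtain ⟨hs1, hs2⟩ := abs_lt.mp hs
    obtain ⟨ht1, ht2⟩ := abs_lt.mp ht
    obtain ⟨hst1, hst2⟩ := abs_lt.mp hst
    set lo : ℝ := max c (max (c - s) (c - s - t)) with hlo_def
    set hi : ℝ := min d (min (d - s) (d - s - t)) with hhi_def
    have hlh : lo < hi := by
      rw [hlo_def, hhi_def]
      simp only [max_lt_iff, lt_min_iff]
      refine ⟨⟨by linarith, by linarith, by linarith⟩,
        ⟨by linarith, by linarith, by linarith⟩, by linarith, by linarith, by linarith⟩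
    set x : ℝ := (lo + hi) / 2 with hx_def
    have hxlo : lo < x := by rw [hx_def]; linarith
    have hxhi : x < hi := by rw [hx_def]; linarith
    have l1 : c ≤ lo := le_max_left _ _
    have l2 : c - s ≤ lo := le_trans (le_max_left _ _) (le_max_right _ _)
    have l3 : c - s - t ≤ lo := le_trans (le_max_right _ _) (le_max_right _ _)
    have u1 : hi ≤ d := min_le_left _ _
    have u2 : hi ≤ d - s := le_trans (min_le_right _ _) (min_le_left _ _)
    have u3 : hi ≤ d - s - t := le_trans (min_le_right _ _) (min_le_right _ _)
    have hxm : x ∈ Set.Ioo c d := ⟨by linarith, by linarith⟩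
    have hxs : x + s ∈ Set.Ioo c d := ⟨by linarith, by linarith⟩
    have hxst : x + s + t ∈ Set.Ioo c d := ⟨by linarith, by linarith⟩
    have e1 := key1 x hxm s hxs
    have e2 := key1 (x + s) hxs t hxst
    have e3 := key1 x hxm (s + t) (by rw [show x + (s + t) = x + s + t by ring]; exact hxst)
    rw [show x + (s + t) = x + s + t by ring] at e3
    linarith [e1, e2, e3]
  obtain ⟨C, hCadd, hCA⟩ := locext (d - c) (by linarith) A hAadd
  have hCsub : ∀ u v : ℝ, C (u - v) = C u - C v := by
    intro u v
    have := hCadd (u - v) v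
    rw [show u - v + v = u by ring] at this
    linarith
  refine ⟨C, hCadd, f1 m - C m, f2 m - C m, ?_, ?_, ?_⟩
  · intro x hx
    have hd : |x - m| < d - c := by
      rw [abs_lt]
      obtain ⟨h1, h2⟩ := hx
      constructor <;> [skip; skip] <;> rw [hm_def] <;> linarith
    have := key1 m hm (x - m) (by rw [show m + (x - m) = x by ring]; exact hx)
    rw [show m + (x - m) = x by ring, ← hCA _ hd, hCsub] at this
    linarith
  · intro x hx
    have hd : |x - m| < d - c := by
      rw [abs_lt]
      obtain ⟨h1, h2⟩ := hx
      constructor <;> [skip; skip] <;> rw [hm_def] <;> linarith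
    have := key2 m hm (x - m) (by rw [show m + (x - m) = x by ring]; exact hx)
    rw [show m + (x - m) = x by ring, ← hCA _ hd, hCsub] at this
    linarith
  · intro u hu
    rw [Set.mem_add] at hu
    obtain ⟨p, hp, q, hq, rfl⟩ := hu
    obtain ⟨x, hx, rfl⟩ := hp
    obtain ⟨y, hy, rfl⟩ := hq
    have hgs : g1 x + g2 y = D (x + y) + (δ1 + δ2) := by
      rw [hg1 _ hx, hg2 _ hy, hDadd]; ring
    have hDi : Dinv (g1 x + g2 y - (δ1 + δ2)) = x + y := by
      rw [hgs, show D (x + y) + (δ1 + δ2) - (δ1 + δ2) = D (x + y) by ring, hDinv1]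
    have e := heq x hx y hy
    have hf1x : f1 x = C x + (f1 m - C m) := by
      have hd : |x - m| < d - c := by
        rw [abs_lt]
        obtain ⟨h1, h2⟩ := hx
        constructor <;> [skip; skip] <;> rw [hm_def] <;> linarith
      have := key1 m hm (x - m) (by rw [show m + (x - m) = x by ring]; exact hx)
      rw [show m + (x - m) = x by ring, ← hCA _ hd, hCsub] at this
      linarith
    have hf2y : f2 y = C y + (f2 m - C m) := by
      have hd : |y - m| < d - c := by
        rw [abs_lt]
        obtain ⟨h1, h2⟩ := hy
        constructor <;> [skip; skip] <;> rw [hm_def] <;> linarith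
      have := key2 m hm (y - m) (by rw [show m + (y - m) = y by ring]; exact hy)
      rw [show m + (y - m) = y by ring, ← hCA _ hd, hCsub] at this
      linarith
    rw [hDi]
    have hCxy : C (x + y) = C x + C y := hCadd x y
    rw [show (1 : ℝ) / 2 * (x + y) = (x + y) / 2 by ring, hCxy]
    linarith [e, hf1x, hf2y]
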